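/- For every integer r ≥ 1, ∫₀¹ log^r(x) Li_{r+1}(x) / (1-x) dx = (-1)^{r+1} (r!/2) [ζ(2r+2) - ζ(r+1)²]. -/

import Mathlib

open MeasureTheory

/-- Polylogarithm `Li n x = ∑_{k ≥ 1} x^k / k^n` (for an integer index `n`). -/
noncomputable def Li (n : ℤ) (x : ℝ) : ℝ := ∑' k : ℕ+, x ^ (k : ℕ) / ((k : ℕ) : ℝ) ^ n

/-- Zeta value `ζ(n) = ∑_{k ≥ 1} 1 / k^n` (equals `0` at `n = 1` by divergence). -/
noncomputable def zetaR (n : ℕ) : ℝ := ∑' k : ℕ+, 1 / ((k : ℕ) : ℝ) ^ n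

/-- The set of zeta values at integers `n ≥ 2`. -/
def zetaValues : Set ℝ := {x : ℝ | ∃ n : ℕ, 2 ≤ n ∧ x = zetaR n}

section Aux

open Set Real


lemma expneg_deriv : ∀ x ∈ Ioi (0:ℝ), HasDerivWithinAt (fun t => rexp (-t)) (-rexp (-x)) (Ioi 0) x := by
  intro x _
  simpa using (hasDerivAt_neg x).exp.hasDerivWithinAt

lemma expneg_inj : Set.InjOn (fun t => rexp (-t)) (Ioi (0:ℝ)) := by
  intro a _ b _ h
  simpa using Real.exp_injective h

lemma expneg_image : (fun t => rexp (-t)) '' (Ioi (0:ℝ)) = Ioo (0:ℝ) 1 := by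
  ext y
  constructor
  · rintro ⟨t, ht, rfl⟩
    exact ⟨Real.exp_pos _, Real.exp_lt_one_iff.mpr (by simpa using ht)⟩
  · rintro ⟨h0, h1⟩
    exact ⟨-Real.log y, by simpa using Real.log_neg h0 h1, by simp [Real.exp_log h0]⟩

lemma gamma_int (j ρ : ℕ) :
    ∫ t in Ioi (0:ℝ), t ^ ρ * rexp (-(((j:ℝ)+1) * t)) = (ρ.factorial : ℝ) / ((j:ℝ)+1) ^ (ρ+1) := by
  have hr : (0:ℝ) < (j:ℝ)+1 := by positivity
  have h := Real.integral_rpow_mul_exp_neg_mul_Ioi (a := (ρ:ℝ)+1) (r := (j:ℝ)+1) (by positivity) hr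
  rw [setIntegral_congr_fun measurableSet_Ioi (g := fun t : ℝ => t ^ (((ρ:ℝ)+1)-1) * rexp (-(((j:ℝ)+1) * t)))]
  · rw [h]
    have hg : Real.Gamma ((ρ:ℝ)+1) = (ρ.factorial : ℝ) := by
      exact_mod_cast Real.Gamma_nat_eq_factorial ρ
    rw [hg, show ((ρ:ℝ)+1) = ((ρ+1 : ℕ) : ℝ) by push_cast; ring, Real.rpow_natCast, one_div,
      inv_pow]
    field_simp
  · intro t _
    simp only [add_sub_cancel_right, Real.rpow_natCast]

lemma transform_eq (j ρ : ℕ) (t : ℝ) :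
    |(-rexp (-t))| • ((fun x => x ^ j * Real.log x ^ ρ) (rexp (-t)))
      = (-1:ℝ)^ρ * (t ^ ρ * rexp (-(((j:ℝ)+1) * t))) := by
  have h1 : rexp (-t) ^ j = rexp (-((j:ℝ) * t)) := by
    rw [← Real.exp_nat_mul]; ring_nf
  have h2 : (-t) ^ ρ = (-1:ℝ)^ρ * t ^ ρ := by rw [neg_pow]
  simp only [abs_neg, abs_of_pos (Real.exp_pos _), Real.log_exp, smul_eq_mul, h1, h2]
  have h3 : rexp (-t) * rexp (-((j:ℝ)*t)) = rexp (-(((j:ℝ)+1)*t)) := by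
    rw [← Real.exp_add]; ring_nf
  rw [← mul_assoc, h3]; ring

lemma key_integral (j ρ : ℕ) :
    ∫ x in Ioo (0:ℝ) 1, x ^ j * Real.log x ^ ρ
      = (-1:ℝ)^ρ * (ρ.factorial : ℝ) / ((j:ℝ)+1) ^ (ρ+1) := by
  rw [← expneg_image, integral_image_eq_integral_abs_deriv_smul measurableSet_Ioi expneg_deriv
    expneg_inj]
  simp_rw [transform_eq j ρ]
  rw [integral_const_mul, gamma_int, mul_div_assoc]

lemma key_integrable (j ρ : ℕ) :
    IntegrableOn (fun x => x ^ j * Real.log x ^ ρ) (Ioo (0:ℝ) 1) := by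
  rw [← expneg_image, integrableOn_image_iff_integrableOn_abs_deriv_smul (f' := fun x => -rexp (-x))
    measurableSet_Ioi expneg_deriv expneg_inj]
  have base : IntegrableOn (fun t : ℝ => t ^ (ρ:ℝ) * rexp (-((j:ℝ)+1) * t ^ (1:ℝ))) (Ioi 0) :=
    integrableOn_rpow_mul_exp_neg_mul_rpow
      (lt_of_lt_of_le neg_one_lt_zero (Nat.cast_nonneg ρ)) one_pos (by positivity)
  have base2 : IntegrableOn (fun t : ℝ => t ^ ρ * rexp (-(((j:ℝ)+1) * t))) (Ioi 0) := by
    refine base.congr_fun (fun t _ => ?_) measurableSet_Ioi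
    beta_reduce
    rw [Real.rpow_one, Real.rpow_natCast, neg_mul]
  have h4 : IntegrableOn (fun x : ℝ => (-1:ℝ)^ρ * (x ^ ρ * rexp (-(((j:ℝ)+1)*x)))) (Ioi 0) :=
    base2.const_mul _
  refine h4.congr_fun (fun t _ => ?_) measurableSet_Ioi
  exact (transform_eq j ρ t).symm

lemma abs_integral (j ρ : ℕ) :
    ∫ x in Ioo (0:ℝ) 1, x ^ j * |Real.log x| ^ ρ
      = (ρ.factorial : ℝ) / ((j:ℝ)+1) ^ (ρ+1) := by
  have h : ∀ x ∈ Ioo (0:ℝ) 1, x ^ j * |Real.log x| ^ ρ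
      = (-1:ℝ)^ρ * (x ^ j * Real.log x ^ ρ) := by
    intro x hx
    rw [abs_of_neg (Real.log_neg hx.1 hx.2), neg_pow]
    ring
  rw [setIntegral_congr_fun measurableSet_Ioo h, integral_const_mul, key_integral]
  rw [mul_div_assoc, ← mul_assoc, ← mul_pow]
  simp [mul_div_assoc]
lemma zetaR_eq (s : ℕ) : zetaR s = ∑' n : ℕ, 1 / ((n:ℝ)+1) ^ s := by
  rw [zetaR, ← Equiv.pnatEquivNat.symm.tsum_eq (fun k : ℕ+ => 1 / ((k : ℕ) : ℝ) ^ s)]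
  refine tsum_congr fun n => ?_
  have : ((Equiv.pnatEquivNat.symm n : ℕ+) : ℕ) = n + 1 := rfl
  rw [this]
  push_cast
  ring_nf

lemma summable_b {s : ℕ} (hs : 2 ≤ s) : Summable (fun n : ℕ => 1 / ((n:ℝ)+1) ^ s) := by
  have h := (Real.summable_one_div_nat_pow (p := s)).mpr hs
  have h2 := h.comp_injective Nat.succ_injective
  refine h2.congr fun n => ?_
  simp [Function.comp]

def eL : ℕ × ℕ ≃ ↥{p : ℕ × ℕ | p.1 < p.2} where
  toFun p := ⟨(p.1, p.1 + p.2 + 1), show p.1 < p.1 + p.2 + 1 by omega⟩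
  invFun q := (q.1.1, q.1.2 - q.1.1 - 1)
  left_inv := fun ⟨a, c⟩ => by
    rw [Prod.ext_iff]
    exact ⟨rfl, show a + c + 1 - a - 1 = c by omega⟩
  right_inv q := by
    obtain ⟨⟨a, c⟩, h⟩ := q
    have h' : a < c := h
    apply Subtype.ext
    rw [Prod.ext_iff]
    exact ⟨rfl, show a + (c - a - 1) + 1 = c by omega⟩

def eG : ℕ × ℕ ≃ ↥{p : ℕ × ℕ | p.2 < p.1} where
  toFun p := ⟨(p.1 + p.2 + 1, p.1), show p.1 < p.1 + p.2 + 1 by omega⟩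
  invFun q := (q.1.2, q.1.1 - q.1.2 - 1)
  left_inv := fun ⟨a, c⟩ => by
    rw [Prod.ext_iff]
    exact ⟨rfl, show a + c + 1 - a - 1 = c by omega⟩
  right_inv q := by
    obtain ⟨⟨a, c⟩, h⟩ := q
    have h' : c < a := h
    apply Subtype.ext
    rw [Prod.ext_iff]
    exact ⟨show c + (a - c - 1) + 1 = a by omega, rfl⟩

def eD : ℕ ≃ ↥{p : ℕ × ℕ | p.1 = p.2} where
  toFun n := ⟨(n, n), rfl⟩
  invFun q := q.1.1
  left_inv n := rfl
  right_inv q := by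
    obtain ⟨⟨a, c⟩, h⟩ := q
    have h' : a = c := h
    apply Subtype.ext
    rw [Prod.ext_iff]
    exact ⟨rfl, h'⟩

set_option maxHeartbeats 2000000 in
lemma sum_split (s : ℕ) (hs : 2 ≤ s) :
    (∑' n : ℕ, 1 / ((n:ℝ)+1) ^ s) ^ 2
      = 2 * (∑' p : ℕ × ℕ, 1 / ((p.1:ℝ)+1) ^ s * (1 / ((p.1:ℝ)+(p.2:ℝ)+2) ^ s))
        + ∑' n : ℕ, 1 / ((n:ℝ)+1) ^ (2*s) := by
  have hb : Summable (fun n : ℕ => 1 / ((n:ℝ)+1) ^ s) := summable_b hs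
  have hF : Summable (fun p : ℕ × ℕ => 1 / ((p.1:ℝ)+1) ^ s * (1 / ((p.2:ℝ)+1) ^ s)) :=
    hb.mul_of_nonneg hb (fun n => by positivity) (fun n => by positivity)
  set F : ℕ × ℕ → ℝ := fun p => 1 / ((p.1:ℝ)+1) ^ s * (1 / ((p.2:ℝ)+1) ^ s) with hFdef
  have hsq : (∑' n : ℕ, 1 / ((n:ℝ)+1) ^ s) ^ 2 = ∑' p : ℕ × ℕ, F p := by
    rw [sq, Summable.tsum_mul_tsum hb hb hF]
  have hU : {p : ℕ × ℕ | p.1 < p.2} ∪ ({p : ℕ × ℕ | p.2 < p.1} ∪ {p : ℕ × ℕ | p.1 = p.2})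
      = univ := by
    ext p; simp only [Set.mem_union, Set.mem_setOf_eq, Set.mem_univ, iff_true]; omega
  have hd1 : Disjoint {p : ℕ × ℕ | p.1 < p.2}
      ({p : ℕ × ℕ | p.2 < p.1} ∪ {p : ℕ × ℕ | p.1 = p.2}) := by
    rw [Set.disjoint_left]
    rintro ⟨a, c⟩ hp (h | h) <;>
      simp only [Set.mem_setOf_eq] at hp h <;> omega
  have hd2 : Disjoint {p : ℕ × ℕ | p.2 < p.1} {p : ℕ × ℕ | p.1 = p.2} := by
    rw [Set.disjoint_left]
    rintro ⟨a, c⟩ hp h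
    simp only [Set.mem_setOf_eq] at hp h
    omega
  have hsplit : ∑' p : ℕ × ℕ, F p
      = (∑' q : ↥{p : ℕ × ℕ | p.1 < p.2}, F q)
        + ((∑' q : ↥{p : ℕ × ℕ | p.2 < p.1}, F q)
          + ∑' q : ↥{p : ℕ × ℕ | p.1 = p.2}, F q) := by
    rw [← tsum_univ F, ← hU,
      Summable.tsum_union_disjoint hd1 (hF.subtype _) (hF.subtype _),
      Summable.tsum_union_disjoint hd2 (hF.subtype _) (hF.subtype _)]
  have hLsum : (∑' q : ↥{p : ℕ × ℕ | p.1 < p.2}, F q)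
      = ∑' p : ℕ × ℕ, 1 / ((p.1:ℝ)+1) ^ s * (1 / ((p.1:ℝ)+(p.2:ℝ)+2) ^ s) := by
    rw [← eL.tsum_eq (fun q : ↥{p : ℕ × ℕ | p.1 < p.2} => F q)]
    refine tsum_congr fun p => ?_
    simp only [eL, Equiv.coe_fn_mk, hFdef]
    push_cast
    ring_nf
  have hGsum : (∑' q : ↥{p : ℕ × ℕ | p.2 < p.1}, F q)
      = ∑' p : ℕ × ℕ, 1 / ((p.1:ℝ)+1) ^ s * (1 / ((p.1:ℝ)+(p.2:ℝ)+2) ^ s) := by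
    rw [← eG.tsum_eq (fun q : ↥{p : ℕ × ℕ | p.2 < p.1} => F q)]
    refine tsum_congr fun p => ?_
    simp only [eG, Equiv.coe_fn_mk, hFdef]
    push_cast
    ring_nf
  have hDsum : (∑' q : ↥{p : ℕ × ℕ | p.1 = p.2}, F q)
      = ∑' n : ℕ, 1 / ((n:ℝ)+1) ^ (2*s) := by
    rw [← eD.tsum_eq (fun q : ↥{p : ℕ × ℕ | p.1 = p.2} => F q)]
    refine tsum_congr fun n => ?_
    simp only [eD, Equiv.coe_fn_mk, hFdef]
    rw [two_mul, pow_add, div_mul_div_comm, one_mul]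
  rw [hsq, hsplit, hLsum, hGsum, hDsum]
  ring

lemma Li_eq {s : ℕ} (x : ℝ) :
    Li (s : ℤ) x = ∑' n : ℕ, x ^ (n+1) / ((n:ℝ)+1) ^ s := by
  rw [Li, ← Equiv.pnatEquivNat.symm.tsum_eq
    (fun k : ℕ+ => x ^ (k : ℕ) / ((k : ℕ) : ℝ) ^ (s : ℤ))]
  refine tsum_congr fun n => ?_
  have h1 : ((Equiv.pnatEquivNat.symm n : ℕ+) : ℕ) = n + 1 := rfl
  rw [h1, zpow_natCast]
  push_cast
  ring_nf

lemma pointwise_expand (r : ℕ) {x : ℝ} (hx : x ∈ Ioo (0:ℝ) 1) :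
    Real.log x ^ r * Li ((r:ℤ) + 1) x / (1 - x)
      = ∑' p : ℕ × ℕ, Real.log x ^ r * x ^ (p.1 + p.2 + 1) / ((p.1:ℝ)+1) ^ (r+1) := by
  obtain ⟨h0, h1⟩ := hx
  have hcast : ((r:ℤ) + 1) = ((r + 1 : ℕ) : ℤ) := by push_cast; ring
  rw [hcast, Li_eq]
  have hh : Summable (fun n : ℕ => ‖x ^ (n+1) / ((n:ℝ)+1) ^ (r+1)‖) := by
    refine Summable.of_nonneg_of_le (fun n => norm_nonneg _) (fun n => ?_)
      ((summable_geometric_of_lt_one h0.le h1).mul_left x)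
    have hd : (1:ℝ) ≤ ((n:ℝ)+1) ^ (r+1) := one_le_pow₀ (by push_cast; linarith [Nat.cast_nonneg (α := ℝ) n])
    rw [Real.norm_eq_abs, abs_div, abs_of_nonneg (pow_nonneg h0.le _),
      abs_of_nonneg (by positivity)]
    calc x ^ (n+1) / ((n:ℝ)+1) ^ (r+1) ≤ x ^ (n+1) / 1 := by
          exact div_le_div_of_nonneg_left (pow_nonneg h0.le _) one_pos hd |>.trans_eq rfl
      _ = x * x ^ n := by rw [div_one, pow_succ]; ring
  have hg : Summable (fun m : ℕ => ‖x ^ m‖) := by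
    refine (summable_geometric_of_lt_one h0.le h1).congr fun m => ?_
    rw [Real.norm_eq_abs, abs_of_nonneg (pow_nonneg h0.le _)]
  have hgeo : (1 - x)⁻¹ = ∑' m : ℕ, x ^ m := (tsum_geometric_of_lt_one h0.le h1).symm
  rw [div_eq_mul_inv, mul_assoc, hgeo, tsum_mul_tsum_of_summable_norm hh hg,
    ← tsum_mul_left]
  refine tsum_congr fun p => ?_
  rw [show p.1 + p.2 + 1 = (p.1 + 1) + p.2 by ring, pow_add]
  ring

end Aux

/-- For every integer `r ≥ 1`,
`∫₀¹ log^r(x) Li_{r+1}(x)/(1-x) dx = (-1)^(r+1)(r!/2)(ζ(2r+2) - ζ(r+1)²)`. -/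
theorem stmt16 (r : ℕ) (hr : 1 ≤ r) :
    (∫ x in (0:ℝ)..1, Real.log x ^ r * Li (r + 1) x / (1 - x))
      = (-1) ^ (r + 1) * ((r.factorial : ℝ) / 2) * (zetaR (2 * r + 2) - zetaR (r + 1) ^ 2) := by
  classical
  set s : ℕ := r + 1 with hs
  have hs2 : 2 ≤ s := by omega
  set f : ℕ × ℕ → ℝ → ℝ :=
    fun p x => Real.log x ^ r * x ^ (p.1 + p.2 + 1) / ((p.1:ℝ)+1) ^ s with hfdef
  -- integrability of each term
  have hf_int : ∀ p : ℕ × ℕ, IntegrableOn (f p) (Set.Ioo (0:ℝ) 1) := by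
    intro p
    have h : IntegrableOn
        (fun x : ℝ => x ^ (p.1 + p.2 + 1) * Real.log x ^ r * ((((p.1:ℝ)+1) ^ s)⁻¹))
        (Set.Ioo (0:ℝ) 1) :=
      (key_integrable (p.1 + p.2 + 1) r).mul_const _
    refine h.congr_fun (fun x _ => ?_) measurableSet_Ioo
    simp only [hfdef]
    rw [div_eq_mul_inv]
    ring
  -- value of the integral of each term
  have hf_val : ∀ p : ℕ × ℕ, ∫ x in Set.Ioo (0:ℝ) 1, f p x
      = ((-1:ℝ)^r * r.factorial) * (1 / ((p.1:ℝ)+1) ^ s * (1 / ((p.1:ℝ)+(p.2:ℝ)+2) ^ s)) := by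
    intro p
    have hcong : ∀ x ∈ Set.Ioo (0:ℝ) 1, f p x
        = (x ^ (p.1 + p.2 + 1) * Real.log x ^ r) * (((p.1:ℝ)+1) ^ s)⁻¹ := by
      intro x _
      simp only [hfdef]
      rw [div_eq_mul_inv]
      ring
    rw [setIntegral_congr_fun measurableSet_Ioo hcong, integral_mul_const, key_integral]
    have hc : ((p.1 + p.2 + 1 : ℕ) : ℝ) + 1 = (p.1:ℝ)+(p.2:ℝ)+2 := by push_cast; ring
    rw [hc, hs]
    ring
  -- value of the integral of the norm of each term
  have hf_nval : ∀ p : ℕ × ℕ, ∫ x in Set.Ioo (0:ℝ) 1, ‖f p x‖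
      = (r.factorial : ℝ) * (1 / ((p.1:ℝ)+1) ^ s * (1 / ((p.1:ℝ)+(p.2:ℝ)+2) ^ s)) := by
    intro p
    have hcong : ∀ x ∈ Set.Ioo (0:ℝ) 1, ‖f p x‖
        = (x ^ (p.1 + p.2 + 1) * |Real.log x| ^ r) * (((p.1:ℝ)+1) ^ s)⁻¹ := by
      intro x hx
      simp only [hfdef]
      rw [Real.norm_eq_abs, abs_div, abs_mul, abs_pow, abs_pow,
        abs_of_nonneg hx.1.le, abs_of_nonneg (by positivity : (0:ℝ) ≤ ((p.1:ℝ)+1) ^ s),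
        div_eq_mul_inv]
      ring
    rw [setIntegral_congr_fun measurableSet_Ioo hcong, integral_mul_const, abs_integral]
    have hc : ((p.1 + p.2 + 1 : ℕ) : ℝ) + 1 = (p.1:ℝ)+(p.2:ℝ)+2 := by push_cast; ring
    rw [hc, hs]
    ring
  -- summability of the norms of the integrals
  have hmaj : Summable (fun p : ℕ × ℕ =>
      (r.factorial : ℝ) * (1 / ((p.1:ℝ)+1) ^ s * (1 / ((p.2:ℝ)+1) ^ s))) := by
    exact ((summable_b hs2).mul_of_nonneg (summable_b hs2)
      (fun n => by positivity) (fun n => by positivity)).mul_left _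
  have hf_nsum : Summable (fun p : ℕ × ℕ => ∫ x in Set.Ioo (0:ℝ) 1, ‖f p x‖) := by
    refine Summable.of_nonneg_of_le
      (fun p => integral_nonneg fun x => norm_nonneg _) (fun p => ?_) hmaj
    rw [hf_nval p]
    have h1 : (1:ℝ) / ((p.1:ℝ)+(p.2:ℝ)+2) ^ s ≤ 1 / ((p.2:ℝ)+1) ^ s := by
      apply one_div_le_one_div_of_le (by positivity)
      exact pow_le_pow_left₀ (by positivity) (by push_cast; linarith [Nat.cast_nonneg (α := ℝ) p.1]) s
    have h2 : (0:ℝ) ≤ 1 / ((p.1:ℝ)+1) ^ s := by positivity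
    have h3 : (0:ℝ) ≤ (r.factorial : ℝ) := by positivity
    apply mul_le_mul_of_nonneg_left _ h3
    exact mul_le_mul_of_nonneg_left h1 h2
  -- interchange sum and integral
  have hinterchange : ∑' p : ℕ × ℕ, ∫ x in Set.Ioo (0:ℝ) 1, f p x
      = ∫ x in Set.Ioo (0:ℝ) 1, ∑' p : ℕ × ℕ, f p x :=
    integral_tsum_of_summable_integral_norm hf_int hf_nsum
  -- rewrite the target integral
  have hIoo : (∫ x in (0:ℝ)..1, Real.log x ^ r * Li (r + 1) x / (1 - x))
      = ∫ x in Set.Ioo (0:ℝ) 1, Real.log x ^ r * Li ((r:ℤ) + 1) x / (1 - x) := by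
    rw [intervalIntegral.integral_of_le zero_le_one, integral_Ioc_eq_integral_Ioo]
  have hcongr : ∫ x in Set.Ioo (0:ℝ) 1, Real.log x ^ r * Li ((r:ℤ) + 1) x / (1 - x)
      = ∫ x in Set.Ioo (0:ℝ) 1, ∑' p : ℕ × ℕ, f p x := by
    refine setIntegral_congr_fun measurableSet_Ioo (fun x hx => ?_)
    exact pointwise_expand r hx
  -- compute the sum of the integrals
  have hsum : ∑' p : ℕ × ℕ, ∫ x in Set.Ioo (0:ℝ) 1, f p x
      = ((-1:ℝ)^r * r.factorial)
        * ∑' p : ℕ × ℕ, 1 / ((p.1:ℝ)+1) ^ s * (1 / ((p.1:ℝ)+(p.2:ℝ)+2) ^ s) := by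
    rw [← tsum_mul_left]
    exact tsum_congr hf_val
  -- zeta values
  have hz1 : zetaR s = ∑' n : ℕ, 1 / ((n:ℝ)+1) ^ s := zetaR_eq s
  have hz2 : zetaR (2 * r + 2) = ∑' n : ℕ, 1 / ((n:ℝ)+1) ^ (2 * s) := by
    rw [show 2 * r + 2 = 2 * s by omega]
    exact zetaR_eq (2 * s)
  have hsplit := sum_split s hs2
  rw [hIoo, hcongr, ← hinterchange, hsum, hz2, hz1, hsplit, hs, pow_succ]
  ring
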